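/- Let L^♯ = L^♯_H + L^♯_D where L^♯_H = i[H,·] and L^♯_D is self-adjoint and adjoint-preserving with respect to the inner product ⟨⟨A,B⟩⟩_s = Tr[Σ^{1−s}A†Σ^s B] with Σ = ρ_{β_f} the Gibbs state of H. Suppose L^♯_D maps each diagonal projector |n⟩⟨n| into the span of {|m⟩⟨m|}. Then for every τ ≥ 0, e^{τL^♯}[|n⟩⟨n|] = e^{τL^♯_D}[|n⟩⟨n|], and consequently ⟨m|e^{τL^♯}[|n⟩⟨n|]|m⟩ = e^{-β_f(E_n−E_m)}⟨n|e^{τL^♯}[|m⟩⟨m|]|n⟩ for all m, n, τ (so the quantum fluctuation relation holds at all times). -/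

import Mathlib

open Matrix BigOperators
open scoped ComplexOrder

noncomputable section

/-- `d×d` complex matrices. -/
abbrev Mat (d : ℕ) := Matrix (Fin d) (Fin d) ℂ

/-- The rank-one matrix `|u⟩⟨w|`. -/
def ketbra {d : ℕ} (u w : Fin d → ℂ) : Mat d := Matrix.vecMulVec u (star w)

/-- The matrix element `⟨u|A|w⟩`. -/
def matElem {d : ℕ} (u : Fin d → ℂ) (A : Mat d) (w : Fin d → ℂ) : ℂ :=
  star u ⬝ᵥ (A *ᵥ w)

/-- `v` is an orthonormal family. -/
def ONB {d : ℕ} (v : Fin d → Fin d → ℂ) : Prop :=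
  ∀ i j, star (v i) ⬝ᵥ v j = if i = j then 1 else 0

/-- The Gibbs population `p_m(β) = e^{-βE_m} / Σ_k e^{-βE_k}`. -/
def gibbsP {d : ℕ} (E : Fin d → ℝ) (β : ℝ) (m : Fin d) : ℝ :=
  Real.exp (-(β * E m)) / ∑ k, Real.exp (-(β * E k))

/-- The Gibbs state `ρ_β = e^{-βH}/Tr[e^{-βH}]`, written via the spectral
decomposition of `H` in its orthonormal eigenbasis `v`. -/
def gibbs {d : ℕ} (v : Fin d → Fin d → ℂ) (E : Fin d → ℝ) (β : ℝ) : Mat d :=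
  ∑ m, (gibbsP E β m : ℂ) • ketbra (v m) (v m)

/-- The positive matrix `Σ = Σ_m h_m |m⟩⟨m|` given by its spectral decomposition. -/
def specMat {d : ℕ} (v : Fin d → Fin d → ℂ) (h : Fin d → ℝ) : Mat d :=
  ∑ m, (h m : ℂ) • ketbra (v m) (v m)

/-- The real power `Σ^t` of the positive matrix `Σ = Σ_m h_m |m⟩⟨m|`,
defined via the spectral theorem. -/
def specPow {d : ℕ} (v : Fin d → Fin d → ℂ) (h : Fin d → ℝ) (t : ℝ) : Mat d :=
  ∑ m, ((h m ^ t : ℝ) : ℂ) • ketbra (v m) (v m)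

/-- The sesquilinear form `⟨⟨A,B⟩⟩_s = Tr[Σ^{1-s} A† Σ^s B]`. -/
def inn {d : ℕ} (v : Fin d → Fin d → ℂ) (h : Fin d → ℝ) (s : ℝ)
    (A B : Mat d) : ℂ :=
  (specPow v h (1 - s) * Aᴴ * specPow v h s * B).trace

attribute [local instance] Matrix.normedAddCommGroup Matrix.normedSpace

instance instIsTopologicalRingMatCLM (d : ℕ) : IsTopologicalRing (Mat d →L[ℂ] Mat d) := by
  let R : NormedRing (Mat d →L[ℂ] Mat d) := ContinuousLinearMap.toNormedRing
  exact NonUnitalSeminormedRing.toIsTopologicalRing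

namespace Stmt19Aux

variable {d : ℕ}

lemma ketbra_conjT (u w : Fin d → ℂ) : (ketbra u w)ᴴ = ketbra w u := by
  ext i j
  simp [ketbra, Matrix.vecMulVec_apply, mul_comm]

lemma mul_ketbra (A : Mat d) (u w : Fin d → ℂ) : A * ketbra u w = ketbra (A *ᵥ u) w := by
  ext i j
  simp [ketbra, Matrix.mul_apply, Matrix.vecMulVec_apply, Matrix.mulVec, dotProduct,
    Finset.sum_mul, mul_assoc]

lemma ketbra_mul_ketbra (u w x y : Fin d → ℂ) :
    ketbra u w * ketbra x y = (star w ⬝ᵥ x) • ketbra u y := by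
  ext i j
  simp [ketbra, Matrix.mul_apply, Matrix.vecMulVec_apply, dotProduct,
    Finset.mul_sum, Finset.sum_mul]
  ring_nf
  exact Finset.sum_congr rfl fun k _ => by ring

lemma trace_ketbra (u w : Fin d → ℂ) : (ketbra u w).trace = star w ⬝ᵥ u := by
  simp [ketbra, Matrix.trace, Matrix.diag, Matrix.vecMulVec_apply, dotProduct, mul_comm]

lemma ketbra_mul (A : Mat d) (u w : Fin d → ℂ) : ketbra u w * A = ketbra u (Aᴴ *ᵥ w) := by
  ext i j
  simp [ketbra, Matrix.mul_apply, Matrix.vecMulVec_apply, Matrix.mulVec, dotProduct,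
    Finset.mul_sum, mul_comm, mul_left_comm]

lemma trace_ketbra_mul (u w : Fin d → ℂ) (X : Mat d) :
    (ketbra u w * X).trace = matElem w X u := by
  rw [ketbra_mul, trace_ketbra, matElem, Matrix.star_mulVec, Matrix.conjTranspose_conjTranspose,
    Matrix.dotProduct_mulVec]

lemma ketbra_smul_left (c : ℂ) (u w : Fin d → ℂ) : ketbra (c • u) w = c • ketbra u w := by
  ext i j; simp [ketbra, Matrix.vecMulVec_apply, mul_assoc]

lemma ketbra_smul_right (c : ℂ) (u w : Fin d → ℂ) :
    ketbra u (c • w) = (starRingEnd ℂ c) • ketbra u w := by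
  ext i j; simp [ketbra, Matrix.vecMulVec_apply]; ring

lemma specPow_mul_ketbra {v : Fin d → Fin d → ℂ} (hv : ONB v) (h : Fin d → ℝ) (t : ℝ)
    (m : Fin d) (w : Fin d → ℂ) :
    specPow v h t * ketbra (v m) w = ((h m ^ t : ℝ) : ℂ) • ketbra (v m) w := by
  have hv' : ∀ i j, star (v i) ⬝ᵥ v j = if i = j then (1:ℂ) else 0 := hv
  rw [specPow, Finset.sum_mul]
  simp only [smul_mul_assoc, ketbra_mul_ketbra, hv']
  simp [ite_smul, Finset.sum_ite_eq']

lemma ketbra_mul_specPow {v : Fin d → Fin d → ℂ} (hv : ONB v) (h : Fin d → ℝ) (t : ℝ)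
    (m : Fin d) (w : Fin d → ℂ) :
    ketbra w (v m) * specPow v h t = ((h m ^ t : ℝ) : ℂ) • ketbra w (v m) := by
  have hv' : ∀ i j, star (v i) ⬝ᵥ v j = if i = j then (1:ℂ) else 0 := hv
  rw [specPow, Finset.mul_sum]
  simp only [mul_smul_comm, ketbra_mul_ketbra, hv']
  simp [ite_smul, Finset.sum_ite_eq]

lemma rpow_combine {x : ℝ} (hx : 0 < x) (s : ℝ) : x ^ (1 - s) * x ^ s = x := by
  rw [← Real.rpow_add hx, sub_add_cancel, Real.rpow_one]

lemma innA {v : Fin d → Fin d → ℂ} (hv : ONB v) {h : Fin d → ℝ} (hpos : ∀ m, 0 < h m)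
    (s : ℝ) (m : Fin d) (X : Mat d) :
    inn v h s (ketbra (v m) (v m)) X = (h m : ℂ) * matElem (v m) X (v m) := by
  rw [inn, ketbra_conjT, specPow_mul_ketbra hv, smul_mul_assoc, ketbra_mul_specPow hv,
    smul_smul, smul_mul_assoc, Matrix.trace_smul, trace_ketbra_mul, smul_eq_mul,
    ← Complex.ofReal_mul, rpow_combine (hpos m)]

lemma innB {v : Fin d → Fin d → ℂ} (hv : ONB v) {h : Fin d → ℝ} (hpos : ∀ m, 0 < h m)
    (s : ℝ) (n : Fin d) (X : Mat d) :
    inn v h s X (ketbra (v n) (v n)) = (h n : ℂ) * matElem (v n) Xᴴ (v n) := by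
  rw [inn, Matrix.mul_assoc (specPow v h (1 - s) * Xᴴ), specPow_mul_ketbra hv,
    mul_smul_comm, Matrix.trace_smul, Matrix.trace_mul_comm, ← Matrix.mul_assoc,
    ketbra_mul_specPow hv, smul_mul_assoc, Matrix.trace_smul, trace_ketbra_mul,
    smul_smul, smul_eq_mul, ← Complex.ofReal_mul, mul_comm ((h n)^s), rpow_combine (hpos n)]

lemma matElem_smul (c : ℂ) (u w : Fin d → ℂ) (X : Mat d) :
    matElem u (c • X) w = c * matElem u X w := by
  simp [matElem, Matrix.smul_mulVec]

lemma coe_smul' (r : ℝ) (X : Mat d) : r • X = ((r : ℝ) : ℂ) • X := by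
  ext i j
  simp [Matrix.smul_apply, Complex.real_smul]

/-- The matrix element as a continuous linear map in the middle argument. -/
def matElemL (u w : Fin d → ℂ) : Mat d →L[ℂ] ℂ :=
  LinearMap.toContinuousLinearMap
    { toFun := fun X => matElem u X w
      map_add' := fun X Y => by simp [matElem, Matrix.add_mulVec]
      map_smul' := fun c X => by simp [matElem, Matrix.smul_mulVec] }

lemma matElemL_apply (u w : Fin d → ℂ) (X : Mat d) : matElemL u w X = matElem u X w := rfl

lemma exp_apply (M : Mat d →L[ℂ] Mat d) (A : Mat d) :
    (NormedSpace.exp M) A = ∑' k : ℕ, ((k.factorial : ℂ))⁻¹ • (M ^ k) A := by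
  rw [NormedSpace.exp_eq_tsum ℂ]
  have hs : Summable fun k : ℕ => ((k.factorial : ℂ))⁻¹ • M ^ k :=
    @NormedSpace.expSeries_summable' ℂ _ _ _ _ ContinuousLinearMap.toNormedRing
      ContinuousLinearMap.toNormedAlgebra (FiniteDimensional.complete ℂ _) M
  have h := (ContinuousLinearMap.apply ℂ (Mat d) A).map_tsum hs
  exact h

lemma summable_exp_apply (M : Mat d →L[ℂ] Mat d) (A : Mat d) :
    Summable fun k : ℕ => ((k.factorial : ℂ))⁻¹ • (M ^ k) A := by
  have hs : Summable fun k : ℕ => ((k.factorial : ℂ))⁻¹ • M ^ k :=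
    @NormedSpace.expSeries_summable' ℂ _ _ _ _ ContinuousLinearMap.toNormedRing
      ContinuousLinearMap.toNormedAlgebra (FiniteDimensional.complete ℂ _) M
  have h := (ContinuousLinearMap.apply ℂ (Mat d) A).summable hs
  exact h

lemma matElem_exp (u w : Fin d → ℂ) (M : Mat d →L[ℂ] Mat d) (A : Mat d) :
    matElem u ((NormedSpace.exp M) A) w
      = ∑' k : ℕ, ((k.factorial : ℂ))⁻¹ • matElem u ((M ^ k) A) w := by
  rw [exp_apply]
  have h := (matElemL u w).map_tsum (summable_exp_apply M A)
  simpa [matElemL_apply, matElem_smul, smul_eq_mul] using h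

end Stmt19Aux

open Stmt19Aux

theorem stmt19 {d : ℕ} (H : Mat d) (hH : H.IsHermitian)
    (v : Fin d → Fin d → ℂ) (hv : ONB v) (E : Fin d → ℝ)
    (hEig : ∀ m, H *ᵥ v m = (E m : ℂ) • v m) (βf : ℝ)
    (s : ℝ) (hs : s ∈ Set.Icc (0:ℝ) 1)
    (LH LD : Mat d →L[ℂ] Mat d)
    (hLH : ∀ A : Mat d, LH A = Complex.I • (H * A - A * H))
    (hSelf : ∀ A B : Mat d,
      inn v (gibbsP E βf) s A (LD B) = inn v (gibbsP E βf) s (LD A) B)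
    (hAdj : ∀ A : Mat d, (LD A)ᴴ = LD Aᴴ)
    (hDiag : ∀ n, ∃ c : Fin d → ℂ,
      LD (ketbra (v n) (v n)) = ∑ m, c m • ketbra (v m) (v m)) :
    ∀ τ : ℝ, 0 ≤ τ →
      (∀ n, (NormedSpace.exp (τ • (LH + LD))) (ketbra (v n) (v n))
          = (NormedSpace.exp (τ • LD)) (ketbra (v n) (v n))) ∧
      (∀ m n,
        matElem (v m) ((NormedSpace.exp (τ • (LH + LD))) (ketbra (v n) (v n))) (v m)
          = (Real.exp (-(βf * (E n - E m))) : ℂ) *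
            matElem (v n) ((NormedSpace.exp (τ • (LH + LD))) (ketbra (v m) (v m))) (v n)) := by
  intro τ _
  have hppos : ∀ m, 0 < gibbsP E βf m := by
    intro m
    have hden : 0 < ∑ k, Real.exp (-(βf * E k)) :=
      Finset.sum_pos (fun k _ => Real.exp_pos _) ⟨m, Finset.mem_univ m⟩
    exact div_pos (Real.exp_pos _) hden
  -- LH annihilates the diagonal projectors
  have hker : ∀ n, LH (ketbra (v n) (v n)) = 0 := by
    intro n
    rw [hLH]
    have h1 : H * ketbra (v n) (v n) = (E n : ℂ) • ketbra (v n) (v n) := by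
      rw [mul_ketbra, hEig, ketbra_smul_left]
    have h2 : ketbra (v n) (v n) * H = (E n : ℂ) • ketbra (v n) (v n) := by
      rw [ketbra_mul, hH.eq, hEig, ketbra_smul_right]
      simp [Complex.conj_ofReal]
    rw [h1, h2, sub_self, smul_zero]
  -- the diagonal span
  set S : Submodule ℂ (Mat d) :=
    Submodule.span ℂ (Set.range fun m => ketbra (v m) (v m)) with hS
  have hmem : ∀ n, ketbra (v n) (v n) ∈ S := fun n => Submodule.subset_span ⟨n, rfl⟩
  have hLH0 : ∀ X ∈ S, LH X = 0 := by
    have hle : S ≤ LinearMap.ker (LH : Mat d →ₗ[ℂ] Mat d) := by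
      rw [hS, Submodule.span_le]
      rintro _ ⟨n, rfl⟩
      simpa [LinearMap.mem_ker] using hker n
    intro X hX
    simpa using hle hX
  have hLDS : ∀ X ∈ S, LD X ∈ S := by
    have hle : S ≤ S.comap (LD : Mat d →ₗ[ℂ] Mat d) := by
      conv_lhs => rw [hS]
      rw [Submodule.span_le]
      rintro _ ⟨n, rfl⟩
      simp only [SetLike.mem_coe, Submodule.mem_comap, ContinuousLinearMap.coe_coe]
      obtain ⟨c, hc⟩ := hDiag n
      rw [hc]
      exact Submodule.sum_mem _ fun m _ => Submodule.smul_mem _ _ (hmem m)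
    intro X hX
    simpa using hle hX
  -- powers of the two generators agree on the diagonal span
  have hpow : ∀ (k : ℕ) (X : Mat d), X ∈ S →
      ((τ • (LH + LD)) ^ k) X = ((τ • LD) ^ k) X ∧ ((τ • LD) ^ k) X ∈ S := by
    intro k
    induction k with
    | zero => intro X hX; constructor <;> simpa using hX
    | succ k ih =>
      intro X hX
      have h1 : (τ • (LH + LD)) X = (τ • LD) X := by
        simp [ContinuousLinearMap.smul_apply, ContinuousLinearMap.add_apply, hLH0 X hX]
      have h2 : (τ • LD) X ∈ S := by
        rw [ContinuousLinearMap.smul_apply, coe_smul']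
        exact Submodule.smul_mem _ _ (hLDS X hX)
      have hsucc : ∀ (M : Mat d →L[ℂ] Mat d) (Y : Mat d), (M ^ (k+1)) Y = (M ^ k) (M Y) := by
        intro M Y
        rw [pow_succ, ContinuousLinearMap.mul_apply]
      refine ⟨?_, ?_⟩
      · rw [hsucc, hsucc, h1]
        exact (ih _ h2).1
      · rw [hsucc]
        exact (ih _ h2).2
  have part1 : ∀ n, (NormedSpace.exp (τ • (LH + LD))) (ketbra (v n) (v n))
      = (NormedSpace.exp (τ • LD)) (ketbra (v n) (v n)) := by
    intro n
    rw [exp_apply, exp_apply]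
    exact tsum_congr fun k => by rw [(hpow k _ (hmem n)).1]
  refine ⟨part1, ?_⟩
  intro m n
  -- self-adjointness of powers of LD
  have hSelfPow : ∀ (k : ℕ) (A B : Mat d),
      inn v (gibbsP E βf) s A ((LD ^ k) B) = inn v (gibbsP E βf) s ((LD ^ k) A) B := by
    intro k
    induction k with
    | zero => intro A B; simp
    | succ k ih =>
      intro A B
      have e1 : (LD ^ (k+1)) B = (LD ^ k) (LD B) := by
        rw [pow_succ, ContinuousLinearMap.mul_apply]
      have e2 : (LD ^ (k+1)) A = LD ((LD ^ k) A) := by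
        rw [pow_succ', ContinuousLinearMap.mul_apply]
      rw [e1, e2, ih, hSelf]
  -- powers of LD preserve hermiticity of diagonal projectors
  have hAdjPow : ∀ (k : ℕ) (j : Fin d),
      ((LD ^ k) (ketbra (v j) (v j)))ᴴ = (LD ^ k) (ketbra (v j) (v j)) := by
    intro k j
    induction k with
    | zero => simpa using ketbra_conjT (v j) (v j)
    | succ k ih =>
      have e2 : (LD ^ (k+1)) (ketbra (v j) (v j)) = LD ((LD ^ k) (ketbra (v j) (v j))) := by
        rw [pow_succ', ContinuousLinearMap.mul_apply]
      rw [e2, hAdj, ih]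
  -- the per-power key identity
  have hkey : ∀ k : ℕ,
      (gibbsP E βf m : ℂ) * matElem (v m) ((LD ^ k) (ketbra (v n) (v n))) (v m)
        = (gibbsP E βf n : ℂ) * matElem (v n) ((LD ^ k) (ketbra (v m) (v m))) (v n) := by
    intro k
    calc (gibbsP E βf m : ℂ) * matElem (v m) ((LD ^ k) (ketbra (v n) (v n))) (v m)
        = inn v (gibbsP E βf) s (ketbra (v m) (v m)) ((LD ^ k) (ketbra (v n) (v n))) :=
          (innA hv hppos s m _).symm
      _ = inn v (gibbsP E βf) s ((LD ^ k) (ketbra (v m) (v m))) (ketbra (v n) (v n)) :=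
          hSelfPow k _ _
      _ = (gibbsP E βf n : ℂ) * matElem (v n) (((LD ^ k) (ketbra (v m) (v m)))ᴴ) (v n) :=
          innB hv hppos s n _
      _ = _ := by rw [hAdjPow]
  have hsmulpow : ∀ (k : ℕ) (X : Mat d),
      ((τ • LD) ^ k) X = ((τ ^ k : ℝ) : ℂ) • ((LD ^ k) X) := by
    intro k
    induction k with
    | zero => intro X; simp
    | succ k ih =>
      intro X
      have e : ((τ • LD) ^ (k+1)) X = ((τ • LD) ^ k) ((τ • LD) X) := by
        rw [pow_succ, ContinuousLinearMap.mul_apply]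
      have e' : ((LD : Mat d →L[ℂ] Mat d) ^ (k+1)) X = (LD ^ k) (LD X) := by
        rw [pow_succ, ContinuousLinearMap.mul_apply]
      rw [e, e', ContinuousLinearMap.smul_apply, coe_smul', _root_.map_smul, ih, smul_smul,
        ← Complex.ofReal_mul, mul_comm τ (τ ^ k), ← pow_succ]
  have hePm : (Real.exp (-(βf * (E n - E m))) : ℂ) * (gibbsP E βf m : ℂ)
      = (gibbsP E βf n : ℂ) := by
    have hr : Real.exp (-(βf * (E n - E m))) * gibbsP E βf m = gibbsP E βf n := by
      unfold gibbsP
      rw [← mul_div_assoc, ← Real.exp_add]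
      have : -(βf * (E n - E m)) + -(βf * E m) = -(βf * E n) := by ring
      rw [this]
    exact_mod_cast hr
  rw [part1 n, part1 m]
  have hpm : (gibbsP E βf m : ℂ) ≠ 0 := by
    exact_mod_cast (hppos m).ne'
  apply mul_left_cancel₀ hpm
  calc (gibbsP E βf m : ℂ)
        * matElem (v m) ((NormedSpace.exp (τ • LD)) (ketbra (v n) (v n))) (v m)
      = ∑' k : ℕ, (gibbsP E βf m : ℂ) *
          (((k.factorial : ℂ))⁻¹ • matElem (v m) (((τ • LD) ^ k) (ketbra (v n) (v n))) (v m)) := by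
        rw [matElem_exp, tsum_mul_left]
    _ = ∑' k : ℕ, (gibbsP E βf n : ℂ) *
          (((k.factorial : ℂ))⁻¹ • matElem (v n) (((τ • LD) ^ k) (ketbra (v m) (v m))) (v n)) := by
        refine tsum_congr fun k => ?_
        have h1 := hkey k
        rw [hsmulpow, hsmulpow, matElem_smul, matElem_smul]
        simp only [smul_eq_mul]
        linear_combination (((k.factorial : ℂ))⁻¹ * ((τ ^ k : ℝ) : ℂ)) * h1
    _ = (gibbsP E βf n : ℂ)
        * matElem (v n) ((NormedSpace.exp (τ • LD)) (ketbra (v m) (v m))) (v n) := by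
        rw [matElem_exp, tsum_mul_left]
    _ = (gibbsP E βf m : ℂ) * ((Real.exp (-(βf * (E n - E m))) : ℂ) *
          matElem (v n) ((NormedSpace.exp (τ • LD)) (ketbra (v m) (v m))) (v n)) := by
        rw [← hePm]; ring
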